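/- Let Ω ⊂ ℝⁿ be bounded and convex, let u, φ : closure(Ω) → ℝ be continuous convex functions with u = φ on ∂Ω and u ≥ φ on Ω. Then the subgradient image ∂u(Ω) is contained in ∂φ(Ω). -/
import Mathlib


open RealInnerProductSpace

/-- If `u, φ` are continuous convex functions on a bounded convex domain `Ω`,
equal on `∂Ω` with `u ≥ φ` in `Ω`, then the subgradient image `∂u(Ω)` is
contained in `∂φ(Ω)`. -/
theorem stmt_16 (n : ℕ) (Ω : Set (EuclideanSpace ℝ (Fin n)))
    (hΩopen : IsOpen Ω) (hΩconv : Convex ℝ Ω) (hΩbd : Bornology.IsBounded Ω)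
    (u φ : EuclideanSpace ℝ (Fin n) → ℝ)
    (hu_cont : ContinuousOn u (closure Ω)) (hφ_cont : ContinuousOn φ (closure Ω))
    (hu_conv : ConvexOn ℝ Ω u) (hφ_conv : ConvexOn ℝ Ω φ)
    (hbdry : ∀ x ∈ frontier Ω, u x = φ x)
    (hge : ∀ x ∈ Ω, φ x ≤ u x) :
    ∀ x ∈ Ω, ∀ p : EuclideanSpace ℝ (Fin n),
      (∀ y ∈ Ω, u x + ⟪p, y - x⟫ ≤ u y) →
      ∃ x' ∈ Ω, ∀ y ∈ Ω, φ x' + ⟪p, y - x'⟫ ≤ φ y := by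
  intro x hx p hp
  set L : EuclideanSpace ℝ (Fin n) → ℝ := fun y => u x + ⟪p, y - x⟫ with hL
  have hLcont : Continuous L := by
    apply Continuous.add continuous_const
    exact Continuous.inner continuous_const (continuous_id.sub continuous_const)
  -- L ≤ u on closure Ω
  have hLu : ∀ z ∈ closure Ω, L z ≤ u z := by
    intro z hz
    have hneBot : (nhdsWithin z Ω).NeBot := mem_closure_iff_nhdsWithin_neBot.mp hz
    have hc : ContinuousWithinAt (fun y => u y - L y) Ω z :=
      ((hu_cont z hz).sub hLcont.continuousWithinAt).mono subset_closure
    have h0 : 0 ≤ u z - L z := by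
      refine ge_of_tendsto hc ?_
      filter_upwards [self_mem_nhdsWithin] with y hy
      exact sub_nonneg.2 (hp y hy)
    linarith
  have hgcont : ContinuousOn (fun y => L y - φ y) (closure Ω) :=
    hLcont.continuousOn.sub hφ_cont
  have hcomp : IsCompact (closure Ω) := hΩbd.isCompact_closure
  obtain ⟨x', hx'mem, hx'max⟩ :=
    hcomp.exists_isMaxOn ⟨x, subset_closure hx⟩ hgcont
  have hLx : L x = u x := by simp [hL]
  have hmax' : ∃ z ∈ Ω, ∀ y ∈ closure Ω, L y - φ y ≤ L z - φ z := by
    by_cases h : x' ∈ Ω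
    · exact ⟨x', h, fun y hy => hx'max hy⟩
    · have hfr : x' ∈ frontier Ω := by
        rw [frontier, hΩopen.interior_eq]; exact ⟨hx'mem, h⟩
      refine ⟨x, hx, fun y hy => ?_⟩
      have h1 : L y - φ y ≤ L x' - φ x' := hx'max hy
      have h2 : L x' - φ x' ≤ 0 := by
        rw [← hbdry x' hfr]; linarith [hLu x' hx'mem]
      have h3 : 0 ≤ L x - φ x := by rw [hLx]; linarith [hge x hx]
      linarith
  obtain ⟨z, hz, hzmax⟩ := hmax'
  refine ⟨z, hz, fun y hy => ?_⟩
  have hkey := hzmax y (subset_closure hy)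
  have hinner : ⟪p, y - x⟫ - ⟪p, z - x⟫ = ⟪p, y - z⟫ := by
    rw [← inner_sub_right]
    congr 1
    abel
  simp only [hL] at hkey
  linarith
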